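/- Let W = M(c,h) be a Virasoro Verma module. Let n ∈ ℤ_+, n_1 ≥ ⋯ ≥ n_s ≥ 2, let l ∈ ℤ_+, p ∈ {1,…,l}, let α_1 < ⋯ < α_p be an increasing sequence in {1,…,l} with complement α^c_1 < ⋯ < α^c_{l-p}, and let m_1,…,m_l ∈ ℤ satisfy m_{α_i} ≥ −1 for i = 1,…,p and m_{α^c_j} < −1 for j = 1,…,l−p. Then Ind(L(m_1)⋯L(m_l)L(-n_1)⋯L(-n_s)L(-1)^n 1_{c,h}) ≤ n + p. Moreover, for fixed values m_{α^c_1},…,m_{α^c_{l-p}} < −1, only finitely many choices of m_{α_1},…,m_{α_p} ≥ −1 yield Ind(L(m_1)⋯L(m_l)L(-n_1)⋯L(-n_s)L(-1)^n 1_{c,h}) ≥ n. -/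

import Mathlib

open scoped BigOperators

noncomputable section

/-- A representation of the Virasoro algebra on a `ℂ`-vector space `M`, with the
central element `k` acting by the scalar `cc`. -/
structure VirRep (M : Type) [AddCommGroup M] [Module ℂ M] : Type where
  L : ℤ → M → M
  cc : ℂ
  L_linear : ∀ n : ℤ, IsLinearMap ℂ (L n)
  comm : ∀ (m n : ℤ) (x : M),
    L m (L n x) - L n (L m x) =
      ((m - n : ℤ) : ℂ) • L (m + n) x +
        (if m + n = 0 then ((m ^ 3 - m : ℤ) : ℂ) / 12 * cc else 0) • x

/-- Index of the standard PBW monomials `L(-p₁)⋯L(-p_t)L(-1)^q 𝟙` of a Verma module: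
a weakly decreasing list of integers `≥ 2` together with the exponent `q` of `L(-1)`. -/
def VirIdx : Type := {l : List ℕ // l.Chain' (· ≥ ·) ∧ ∀ a ∈ l, 2 ≤ a} × ℕ

/-- The level of a monomial index. -/
def VirIdx.level (i : VirIdx) : ℕ := i.1.1.sum + i.2

/-- The monomial index of `L(-1)^q 𝟙`. -/
def VirIdx.pure (q : ℕ) : VirIdx := (⟨[], List.isChain_nil, by simp⟩, q)

/-- The monomial `L(-p₁)⋯L(-p_t)L(-1)^q v`. -/
def VirRep.monomial {M : Type} [AddCommGroup M] [Module ℂ M] (R : VirRep M) (v : M)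
    (i : VirIdx) : M :=
  i.1.1.foldr (fun a acc => R.L (-(a : ℤ)) acc) ((fun x => R.L (-1) x)^[i.2] v)

/-- The Verma module `M(c,h)` for the Virasoro algebra: a representation with central
charge `c` and a highest-weight vector `hw` of weight `h` annihilated by the positive
part, such that the standard monomials form a basis. -/
structure VirVerma (M : Type) [AddCommGroup M] [Module ℂ M] (c h : ℂ)
    extends VirRep M : Type where
  cc_eq : cc = c
  hw : M
  hw_L0 : L 0 hw = h • hw
  hw_sing : ∀ n : ℤ, 0 < n → L n hw = 0
  bas : Module.Basis VirIdx ℂ M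
  bas_eq : ∀ i : VirIdx, bas i = toVirRep.monomial hw i

/-- The index `Ind(w)` of `w` (Definition 5.3 of the paper): the largest exponent `q`
of `L(-1)` occurring in the standard expression of `w`, with `Ind 0 = -1`. -/
def VirVerma.Ind {M : Type} [AddCommGroup M] [Module ℂ M] {c h : ℂ}
    (Vm : VirVerma M c h) (w : M) : ℤ :=
  (((Vm.bas.repr w).support.image (fun i : VirIdx => (i.2 : ℤ))).max).unbotD (-1)

/-- A singular vector: annihilated by `L(n)` for all `n > 0`. -/
def IsSingular {M : Type} [AddCommGroup M] [Module ℂ M] (R : VirRep M) (w : M) : Prop :=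
  ∀ n : ℤ, 0 < n → R.L n w = 0

/-- Stability of a subspace under the Virasoro action. -/
def VirInvariant {M : Type} [AddCommGroup M] [Module ℂ M] (R : VirRep M)
    (S : Submodule ℂ M) : Prop :=
  ∀ (n : ℤ) (x : M), x ∈ S → R.L n x ∈ S

/-- The Vir-submodule generated by a subset. -/
def VirGen {M : Type} [AddCommGroup M] [Module ℂ M] (R : VirRep M) (s : Set M) :
    Submodule ℂ M :=
  sInf {U : Submodule ℂ M | VirInvariant R U ∧ s ⊆ U}


namespace VirasoroAux

variable {M : Type} [AddCommGroup M] [Module ℂ M] {c h : ℂ}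

/-- `L n` as a linear map. -/
def Lf (R : VirRep M) (n : ℤ) : M →ₗ[ℂ] M :=
  { toFun := R.L n, map_add' := (R.L_linear n).map_add,
    map_smul' := (R.L_linear n).map_smul }

@[simp] lemma Lf_apply (R : VirRep M) (n : ℤ) (x : M) : Lf R n x = R.L n x := rfl

lemma comm' (R : VirRep M) (m n : ℤ) (x : M) :
    R.L m (R.L n x) = R.L n (R.L m x) + ((m - n : ℤ) : ℂ) • R.L (m + n) x +
      (if m + n = 0 then ((m ^ 3 - m : ℤ) : ℂ) / 12 * R.cc else 0) • x := by
  have hcm := R.comm m n x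
  calc R.L m (R.L n x)
      = R.L n (R.L m x) + (R.L m (R.L n x) - R.L n (R.L m x)) := by abel
    _ = _ := by rw [hcm, ← add_assoc]

/-- `1` if `m ≥ -1`, else `0`: the amount by which `L m` can raise the index. -/
def eIdx (m : ℤ) : ℕ := if -1 ≤ m then 1 else 0

lemma eIdx_le_one (m : ℤ) : eIdx m ≤ 1 := by unfold eIdx; split <;> omega

lemma eIdx_mono {a b : ℤ} (hab : a ≤ b) : eIdx a ≤ eIdx b := by
  unfold eIdx; split_ifs <;> omega

lemma eIdx_of_le {a : ℤ} (ha : a ≤ -2) : eIdx a = 0 := by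
  unfold eIdx; rw [if_neg]; omega

/-- The span of the basis monomials of index `≤ k` and level `d`. -/
def U2 (Vm : VirVerma M c h) (k : ℕ) (d : ℤ) : Submodule ℂ M :=
  (Finsupp.supported ℂ ℂ {i : VirIdx | i.2 ≤ k ∧ (i.level : ℤ) = d}).comap
    (Vm.bas.repr : M →ₗ[ℂ] (VirIdx →₀ ℂ))

lemma mem_U2_iff (Vm : VirVerma M c h) {k : ℕ} {d : ℤ} {w : M} :
    w ∈ U2 Vm k d ↔
      ∀ i ∈ (Vm.bas.repr w).support, i.2 ≤ k ∧ (i.level : ℤ) = d := by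
  constructor
  · intro hw i hi
    exact (Finsupp.mem_supported ℂ _).1 hw hi
  · intro hw
    exact (Finsupp.mem_supported ℂ _).2 (fun i hi => hw i hi)

lemma bas_mem_U2 (Vm : VirVerma M c h) {k : ℕ} {d : ℤ} (i : VirIdx)
    (h1 : i.2 ≤ k) (h2 : (i.level : ℤ) = d) : Vm.bas i ∈ U2 Vm k d := by
  rw [mem_U2_iff]
  intro j hj
  rw [Module.Basis.repr_self] at hj
  have := Finsupp.support_single_subset hj
  simp only [Finset.mem_singleton] at this
  subst this
  exact ⟨h1, h2⟩

lemma U2_mono (Vm : VirVerma M c h) {k k' : ℕ} {d : ℤ} (hk : k ≤ k') :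
    U2 Vm k d ≤ U2 Vm k' d := by
  intro w hw
  rw [mem_U2_iff] at hw ⊢
  exact fun i hi => ⟨le_trans (hw i hi).1 hk, (hw i hi).2⟩

lemma apply_U2 (Vm : VirVerma M c h) {k : ℕ} {d : ℤ} {V : Submodule ℂ M} {mm : ℤ}
    (hV : ∀ i : VirIdx, i.2 ≤ k → (i.level : ℤ) = d → Vm.L mm (Vm.bas i) ∈ V)
    {w : M} (hw : w ∈ U2 Vm k d) : Vm.L mm w ∈ V := by
  have hrepr := Vm.bas.linearCombination_repr w
  rw [Finsupp.linearCombination_apply] at hrepr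
  have : Vm.L mm w = Lf Vm.toVirRep mm w := rfl
  rw [this, ← hrepr, Finsupp.sum, map_sum]
  apply Submodule.sum_mem
  intro i hi
  rw [map_smul]
  have := (mem_U2_iff Vm).1 hw i hi
  exact Submodule.smul_mem _ _ (hV i this.1 this.2)


lemma mem_U2_of_mem (Vm : VirVerma M c h) {k k' : ℕ} {d d' : ℤ} (hk : k ≤ k')
    (hdd : d = d') {w : M} (hw : w ∈ U2 Vm k d) : w ∈ U2 Vm k' d' :=
  hdd ▸ U2_mono Vm hk hw

lemma monomial_mk (R : VirRep M) (v : M) (ps : List ℕ)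
    (hh : ps.Chain' (· ≥ ·) ∧ ∀ a ∈ ps, 2 ≤ a) (q : ℕ) :
    R.monomial v (⟨ps, hh⟩, q) =
      ps.foldr (fun a acc => R.L (-(a : ℤ)) acc) ((fun x => R.L (-1) x)^[q] v) := rfl

lemma key (Vm : VirVerma M c h) :
    ∀ (μ : ℕ) (ps : List ℕ) (hc : ps.Chain' (· ≥ ·)) (hp2 : ∀ a ∈ ps, 2 ≤ a) (q : ℕ),
      ps.sum + q = μ → ∀ mm : ℤ,
      Vm.L mm (Vm.toVirRep.monomial Vm.hw (⟨ps, hc, hp2⟩, q)) ∈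
        U2 Vm (q + eIdx mm) (((ps.sum : ℤ) + q) - mm) := by
  intro μ
  induction μ using Nat.strong_induction_on with
  | _ μ IH =>
  intro ps hc hp2 q hμ mm
  have he1 : eIdx (-1) = 1 := by unfold eIdx; rw [if_pos] <;> omega
  cases ps with
  | nil =>
    simp only [List.sum_nil, Nat.zero_add] at hμ
    by_cases hm2 : mm ≤ -2
    · -- prepend L mm as a new monomial factor
      have hmm : (-((-mm).toNat : ℤ)) = mm := by omega
      have hx : Vm.L mm (Vm.toVirRep.monomial Vm.hw (⟨[], hc, hp2⟩, q)) =
          Vm.bas (⟨[(-mm).toNat], List.isChain_singleton _, by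
            intro a ha; simp only [List.mem_singleton] at ha; omega⟩, q) := by
        erw [Vm.bas_eq]
        show Vm.L mm ((fun x => Vm.L (-1) x)^[q] Vm.hw) =
          Vm.L (-(((-mm).toNat : ℕ) : ℤ)) ((fun x => Vm.L (-1) x)^[q] Vm.hw)
        rw [hmm]
      rw [hx]
      refine bas_mem_U2 Vm _ (Nat.le_add_right _ _) ?_
      show (([(-mm).toNat].sum + q : ℕ) : ℤ) = _
      simp only [List.sum_cons, List.sum_nil]
      omega
    · by_cases hm1 : mm = -1
      · subst hm1
        have hx : Vm.L (-1) (Vm.toVirRep.monomial Vm.hw (⟨[], hc, hp2⟩, q)) =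
            Vm.bas (⟨[], hc, hp2⟩, q + 1) := by
          erw [Vm.bas_eq]
          show Vm.L (-1) ((fun x => Vm.L (-1) x)^[q] Vm.hw) =
            (fun x => Vm.L (-1) x)^[q + 1] Vm.hw
          exact (Function.iterate_succ_apply' (fun x => Vm.L (-1) x) q Vm.hw).symm
        rw [hx]
        refine bas_mem_U2 Vm _ (by omega) ?_
        show ((([] : List ℕ).sum + (q + 1) : ℕ) : ℤ) = _
        simp only [List.sum_nil]
        omega
      · have hm0 : 0 ≤ mm := by omega
        have hemm : eIdx mm = 1 := by unfold eIdx; rw [if_pos] <;> omega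
        cases q with
        | zero =>
          by_cases hz : mm = 0
          · subst hz
            have hx : Vm.L 0 (Vm.toVirRep.monomial Vm.hw (⟨[], hc, hp2⟩, 0)) =
                h • Vm.bas (⟨[], hc, hp2⟩, 0) := by
              erw [Vm.bas_eq]
              exact Vm.hw_L0
            rw [hx]
            refine Submodule.smul_mem _ _ (bas_mem_U2 Vm _ (by omega) ?_)
            show ((([] : List ℕ).sum + 0 : ℕ) : ℤ) = _
            simp only [List.sum_nil]
            omega
          · have hx : Vm.L mm (Vm.toVirRep.monomial Vm.hw (⟨[], hc, hp2⟩, 0)) = 0 :=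
              Vm.hw_sing mm (by omega)
            rw [hx]; exact Submodule.zero_mem _
        | succ q' =>
          have hy : Vm.toVirRep.monomial Vm.hw (⟨[], hc, hp2⟩, q' + 1) =
              Vm.L (-1) (Vm.toVirRep.monomial Vm.hw (⟨[], hc, hp2⟩, q')) := by
            show (fun x => Vm.L (-1) x)^[q' + 1] Vm.hw =
              Vm.L (-1) ((fun x => Vm.L (-1) x)^[q'] Vm.hw)
            exact Function.iterate_succ_apply' (fun x => Vm.L (-1) x) q' Vm.hw
          rw [hy, comm' Vm.toVirRep mm (-1)]
          refine Submodule.add_mem _ (Submodule.add_mem _ ?_ ?_) ?_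
          · -- L (-1) (L mm y)
            refine apply_U2 Vm ?_ (IH q' (by omega) [] hc hp2 q' (by simp) mm)
            rintro ⟨⟨qs, hq1, hq2⟩, r⟩ hr hlev
            rw [show VirIdx.level ⟨⟨qs, hq1, hq2⟩, r⟩ = qs.sum + r from rfl] at hlev
            simp only [List.sum_nil] at hlev
            have hlt : qs.sum + r < μ := by omega
            have hIH := IH (qs.sum + r) hlt qs hq1 hq2 r rfl (-1)
            erw [Vm.bas_eq]
            refine mem_U2_of_mem Vm (by omega) ?_ hIH
            simp only [List.sum_nil]
            omega
          · -- (mm + 1) • L (mm - 1) y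
            refine Submodule.smul_mem _ _ ?_
            have hIH := IH q' (by omega) [] hc hp2 q' (by simp) (mm + -1)
            refine mem_U2_of_mem Vm ?_ ?_ hIH
            · have := eIdx_le_one (mm + -1)
              omega
            · simp only [List.sum_nil]
              omega
          · -- central term
            split_ifs with hcent
            · refine Submodule.smul_mem _ _ ?_
              rw [← Vm.bas_eq (⟨[], hc, hp2⟩, q')]
              refine bas_mem_U2 Vm _ (by omega) ?_
              show ((([] : List ℕ).sum + q' : ℕ) : ℤ) = _
              simp only [List.sum_nil]
              omega
            · rw [zero_smul]; exact Submodule.zero_mem _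
  | cons p ps' =>
    have hp : 2 ≤ p := hp2 p List.mem_cons_self
    have hc' : ps'.Chain' (· ≥ ·) := hc.tail
    have hp2' : ∀ a ∈ ps', 2 ≤ a := fun a ha => hp2 a (List.mem_cons_of_mem _ ha)
    have hμ' : p + ps'.sum + q = μ := by
      rw [← hμ, List.sum_cons]
    by_cases hpm : mm ≤ -(p : ℤ)
    · -- prepend
      have hm2 : mm ≤ -2 := by omega
      have hmm : (-((-mm).toNat : ℤ)) = mm := by omega
      have hx : Vm.L mm (Vm.toVirRep.monomial Vm.hw (⟨p :: ps', hc, hp2⟩, q)) =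
          Vm.bas (⟨(-mm).toNat :: p :: ps',
            List.IsChain.cons_cons (by omega) hc, by
              intro a ha
              rcases List.mem_cons.1 ha with rfl | ha'
              · omega
              · exact hp2 a ha'⟩, q) := by
        erw [Vm.bas_eq]
        show Vm.L mm (Vm.toVirRep.monomial Vm.hw (⟨p :: ps', hc, hp2⟩, q)) =
          Vm.L (-(((-mm).toNat : ℕ) : ℤ)) (Vm.toVirRep.monomial Vm.hw (⟨p :: ps', hc, hp2⟩, q))
        rw [hmm]
      rw [hx]
      refine bas_mem_U2 Vm _ (Nat.le_add_right _ _) ?_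
      show ((((-mm).toNat :: p :: ps').sum + q : ℕ) : ℤ) = _
      simp only [List.sum_cons]
      omega
    · -- commute
      push_neg at hpm
      have hx : Vm.L mm (Vm.toVirRep.monomial Vm.hw (⟨p :: ps', hc, hp2⟩, q)) =
          Vm.L mm (Vm.L (-(p : ℤ)) (Vm.toVirRep.monomial Vm.hw (⟨ps', hc', hp2'⟩, q))) := rfl
      rw [hx, comm' Vm.toVirRep mm (-(p : ℤ))]
      refine Submodule.add_mem _ (Submodule.add_mem _ ?_ ?_) ?_
      · -- L (-p) (L mm x)
        refine apply_U2 Vm ?_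
          (IH (ps'.sum + q) (by omega) ps' hc' hp2' q rfl mm)
        rintro ⟨⟨qs, hq1, hq2⟩, r⟩ hr hlev
        rw [show VirIdx.level ⟨⟨qs, hq1, hq2⟩, r⟩ = qs.sum + r from rfl] at hlev
        have hlt : qs.sum + r < μ := by omega
        have hIH := IH (qs.sum + r) hlt qs hq1 hq2 r rfl (-(p : ℤ))
        erw [Vm.bas_eq]
        have he : eIdx (-(p : ℤ)) = 0 := eIdx_of_le (by omega)
        refine mem_U2_of_mem Vm (by omega) ?_ hIH
        simp only [List.sum_cons]
        omega
      · refine Submodule.smul_mem _ _ ?_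
        have hIH := IH (ps'.sum + q) (by omega) ps' hc' hp2' q rfl (mm + -(p : ℤ))
        refine mem_U2_of_mem Vm ?_ ?_ hIH
        · have := eIdx_mono (show mm + -(p : ℤ) ≤ mm by omega)
          omega
        · simp only [List.sum_cons]
          omega
      · split_ifs with hcent
        · refine Submodule.smul_mem _ _ ?_
          rw [← Vm.bas_eq (⟨ps', hc', hp2'⟩, q)]
          refine bas_mem_U2 Vm _ (Nat.le_add_right _ _) ?_
          show ((ps'.sum + q : ℕ) : ℤ) = _
          simp only [List.sum_cons]
          omega
        · rw [zero_smul]; exact Submodule.zero_mem _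

lemma step (Vm : VirVerma M c h) {k : ℕ} {d : ℤ} (mm : ℤ) {w : M}
    (hw : w ∈ U2 Vm k d) : Vm.L mm w ∈ U2 Vm (k + eIdx mm) (d - mm) := by
  refine apply_U2 Vm ?_ hw
  rintro ⟨⟨qs, hq1, hq2⟩, r⟩ hr hlev
  rw [show VirIdx.level ⟨⟨qs, hq1, hq2⟩, r⟩ = qs.sum + r from rfl] at hlev
  erw [Vm.bas_eq]
  refine mem_U2_of_mem Vm ?_ ?_ (key Vm (qs.sum + r) qs hq1 hq2 r rfl mm)
  · omega
  · omega

lemma Ind_le_of_mem_U2 (Vm : VirVerma M c h) {k : ℕ} {d : ℤ} {w : M}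
    (hw : w ∈ U2 Vm k d) : Vm.Ind w ≤ (k : ℤ) := by
  unfold VirVerma.Ind
  set s := (Vm.bas.repr w).support.image (fun i : VirIdx => (i.2 : ℤ)) with hs
  rcases s.eq_empty_or_nonempty with he | hne
  · rw [he]
    simp only [Finset.max_empty, WithBot.unbotD_bot]
    omega
  · rw [← Finset.coe_max' hne, WithBot.unbotD_coe]
    obtain ⟨i, hi, hiv⟩ := Finset.mem_image.1 (s.max'_mem hne)
    have hik := ((mem_U2_iff Vm).1 hw i hi).1
    omega

lemma le_Ind_exists (Vm : VirVerma M c h) {w : M} {t : ℤ} (ht : 0 ≤ t)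
    (hI : t ≤ Vm.Ind w) : ∃ i ∈ (Vm.bas.repr w).support, t ≤ (i.2 : ℤ) := by
  unfold VirVerma.Ind at hI
  set s := (Vm.bas.repr w).support.image (fun i : VirIdx => (i.2 : ℤ)) with hs
  rcases s.eq_empty_or_nonempty with he | hne
  · rw [he] at hI
    simp only [Finset.max_empty, WithBot.unbotD_bot] at hI
    omega
  · rw [← Finset.coe_max' hne, WithBot.unbotD_coe] at hI
    obtain ⟨i, hi, hiv⟩ := Finset.mem_image.1 (s.max'_mem hne)
    exact ⟨i, hi, by omega⟩

lemma fold_mem (Vm : VirVerma M c h) {ι : Type} (f : ι → ℤ) :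
    ∀ (LL : List ι) {k : ℕ} {d : ℤ} {w : M}, w ∈ U2 Vm k d →
      LL.foldr (fun i acc => Vm.L (f i) acc) w ∈
        U2 Vm (k + (LL.map fun i => eIdx (f i)).sum) (d - (LL.map f).sum) := by
  intro LL
  induction LL with
  | nil =>
    intro k d w hw
    simpa using hw
  | cons i t ih =>
    intro k d w hw
    refine mem_U2_of_mem Vm ?_ ?_ (step Vm (f i) (ih hw))
    · simp only [List.map_cons, List.sum_cons]
      omega
    · simp only [List.map_cons, List.sum_cons]
      ring

end VirasoroAux

/-- Corollary 5.7 of the paper.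
Let `W = M(c,h)` be a Virasoro Verma module, `n ∈ ℤ₊`, `n₁ ≥ ⋯ ≥ n_s ≥ 2`, `l ∈ ℤ₊`,
and let `S ⊆ {1,…,l}` (the positions of an increasing sequence `α₁ < ⋯ < α_p`) with
`|S| = p ≥ 1`, and `m : {1,…,l} → ℤ` with `m i ≥ -1` on `S` and `m i < -1` off `S`.
Then `Ind(L(m₁)⋯L(m_l)L(-n₁)⋯L(-n_s)L(-1)^n 𝟙) ≤ n + p`; moreover, for fixed values
of `m` off `S`, only finitely many choices of `m ≥ -1` on `S` yield
`Ind(L(m₁)⋯L(m_l)L(-n₁)⋯L(-n_s)L(-1)^n 𝟙) ≥ n`. -/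
theorem virasoro_index_estimates_general
    {M : Type} [AddCommGroup M] [Module ℂ M] (c h : ℂ) (Vm : VirVerma M c h)
    (n : ℕ) (hn : 1 ≤ n)
    (ns : List ℕ) (hdec : ns.Chain' (· ≥ ·)) (h2 : ∀ a ∈ ns, 2 ≤ a)
    (l : ℕ) (hl : 1 ≤ l)
    (S : Finset (Fin l)) (p : ℕ) (hp : S.card = p) (hp1 : 1 ≤ p)
    (m : Fin l → ℤ)
    (hmS : ∀ i ∈ S, -1 ≤ m i) (hmSc : ∀ i ∉ S, m i < -1)
    (w0 : M)
    (hw0 : w0 = ns.foldr (fun a acc => Vm.L (-(a : ℤ)) acc)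
      ((fun x => Vm.L (-1) x)^[n] Vm.hw)) :
    Vm.Ind ((List.finRange l).foldr (fun i acc => Vm.L (m i) acc) w0) ≤ (n : ℤ) + p ∧
    {m' : Fin l → ℤ | (∀ i ∉ S, m' i = m i) ∧ (∀ i ∈ S, -1 ≤ m' i) ∧
      (n : ℤ) ≤ Vm.Ind ((List.finRange l).foldr (fun i acc => Vm.L (m' i) acc) w0)}.Finite := by
  classical
  open VirasoroAux in
  have hw0' : w0 = Vm.bas (⟨ns, hdec, h2⟩, n) := by erw [Vm.bas_eq]; exact hw0
  have hbase : w0 ∈ VirasoroAux.U2 Vm n ((ns.sum : ℤ) + n) := by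
    rw [hw0']
    refine VirasoroAux.bas_mem_U2 Vm _ le_rfl ?_
    show ((ns.sum + n : ℕ) : ℤ) = _
    omega
  have h1 : ∀ i : Fin l, VirasoroAux.eIdx (m i) = if i ∈ S then 1 else 0 := by
    intro i
    by_cases hi : i ∈ S
    · rw [if_pos hi]; unfold VirasoroAux.eIdx; rw [if_pos (hmS i hi)]
    · rw [if_neg hi]; unfold VirasoroAux.eIdx
      rw [if_neg (by have := hmSc i hi; omega)]
  have hsum_e : ((List.finRange l).map fun i => VirasoroAux.eIdx (m i)).sum = p := by
    calc ((List.finRange l).map fun i => VirasoroAux.eIdx (m i)).sum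
        = ∑ i : Fin l, VirasoroAux.eIdx (m i) := (Fin.sum_univ_def _).symm
      _ = ∑ i ∈ S, 1 := by
          rw [Finset.sum_congr rfl fun i _ => h1 i, Finset.sum_ite_mem,
            Finset.univ_inter]
      _ = p := by rw [Finset.sum_const, smul_eq_mul, mul_one, hp]
  constructor
  · have hmem1 := VirasoroAux.fold_mem Vm m (List.finRange l) hbase
    rw [hsum_e] at hmem1
    have hle := VirasoroAux.Ind_le_of_mem_U2 Vm hmem1
    omega
  · set C : ℤ := (ns.sum : ℤ) - (∑ i ∈ Sᶜ, m i) + p - 1 with hC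
    refine Set.Finite.subset
      (Set.Finite.pi (t := fun i => if i ∈ S then Set.Icc (-1 : ℤ) C else {m i}) ?_) ?_
    · intro i
      by_cases hi : i ∈ S
      · simp only [if_pos hi]; exact Set.finite_Icc _ _
      · simp only [if_neg hi]; exact Set.finite_singleton _
    · rintro m' ⟨hoff, hon, hInd⟩
      have hmem2 := VirasoroAux.fold_mem Vm m' (List.finRange l) hbase
      obtain ⟨i0, hi0s, hi0⟩ :=
        VirasoroAux.le_Ind_exists Vm (Int.natCast_nonneg n) hInd
      have hcond := ((VirasoroAux.mem_U2_iff Vm).1 hmem2 i0 hi0s).2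
      have hlev_ge : (i0.2 : ℤ) ≤ (i0.level : ℤ) := by
        have hle' : i0.2 ≤ i0.level := Nat.le_add_left _ _
        exact_mod_cast hle'
      have hsum' : ((List.finRange l).map m').sum = ∑ i : Fin l, m' i :=
        (Fin.sum_univ_def m').symm
      rw [hsum'] at hcond
      have hsplit := Finset.sum_add_sum_compl S m'
      have hoffsum : ∑ i ∈ Sᶜ, m' i = ∑ i ∈ Sᶜ, m i :=
        Finset.sum_congr rfl fun i hi => hoff i (Finset.mem_compl.1 hi)
      have hSsum : ∑ i ∈ S, m' i ≤ (ns.sum : ℤ) - ∑ i ∈ Sᶜ, m i := by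
        have h0 : (n : ℤ) ≤ (i0.level : ℤ) := le_trans hi0 hlev_ge
        omega
      rw [Set.mem_univ_pi]
      intro i
      by_cases hi : i ∈ S
      · simp only [if_pos hi, Set.mem_Icc]
        refine ⟨hon i hi, ?_⟩
        have herase : m' i + ∑ j ∈ S.erase i, m' j = ∑ j ∈ S, m' j :=
          Finset.add_sum_erase S m' hi
        have hcard : (S.erase i).card = p - 1 := by
          rw [Finset.card_erase_of_mem hi, hp]
        have hlow : -(((S.erase i).card : ℕ) : ℤ) ≤ ∑ j ∈ S.erase i, m' j := by
          have hss := Finset.sum_le_sum (s := S.erase i) (f := fun _ => (-1 : ℤ)) (g := m')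
            (fun j hj => hon j (Finset.mem_of_mem_erase hj))
          simpa using hss
        rw [hcard] at hlow
        have hp1' : (1 : ℕ) ≤ p := hp1
        omega
      · simp only [if_neg hi, Set.mem_singleton_iff]
        exact hoff i hi
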